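/- arXiv:2211.07801 — 2 statements merged into one kernel-verified Lean document; each statement's English description precedes it below -/
import Mathlib

section
/- Suppose θ_{t,s} = θ¹_t · θ²_s for continuous strictly positive functions θ¹,θ²:[0,T]→(0,∞). Then the map C↦Y^C is injective: if two consumption plans C and C' satisfy Y^C_t = Y^{C'}_t for all t∈[0,T], then C_t = C'_t for all t∈[0,T]. -/
open MeasureTheory Set Filter

noncomputable section

/-- A consumption plan on `[0,T]`, identified with the finite measure `dC` it induces on
`[0,T]` (including a possible point mass at `0`, corresponding to `C_{0-} = 0`).
The cumulative consumption function is `t ↦ (μ (Icc 0 t)).toReal`, which is automatically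
nonnegative, nondecreasing and right-continuous. -/
structure ConsumptionPlan (T : ℝ) where
  μ : Measure ℝ
  fin : IsFiniteMeasure μ
  supp : μ (Set.Icc 0 T)ᶜ = 0

/-- The cumulative consumption `C_t`. -/
def ConsumptionPlan.val {T : ℝ} (C : ConsumptionPlan T) (t : ℝ) : ℝ :=
  (C.μ (Set.Icc 0 t)).toReal

/-- The level of satisfaction `Y^C_t = η_t + ∫_0^t θ(t,s) dC_s` (integral over `[0,t]`). -/
def satisfaction (η : ℝ → ℝ) (θ : ℝ → ℝ → ℝ) {T : ℝ} (C : ConsumptionPlan T) (t : ℝ) : ℝ :=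
  η t + ∫ s in Set.Icc 0 t, θ t s ∂C.μ

/-- `U` is a (continuous) recursive utility for satisfaction level `Y`:
`U_t = ∫_t^T f(s, Y_s, U_s) ds` on `[0,T]`. -/
def IsRecursiveUtility (T : ℝ) (f : ℝ → ℝ → ℝ → ℝ) (Y U : ℝ → ℝ) : Prop :=
  ContinuousOn U (Set.Icc 0 T) ∧ ∀ t ∈ Set.Icc 0 T, U t = ∫ s in t..T, f s (Y s) (U s)

/-- Assumption A1 on the intertemporal aggregator `f`. -/
structure AssumptionA1 (T : ℝ) (f : ℝ → ℝ → ℝ → ℝ) : Prop where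
  strictConcave : ∀ s ∈ Set.Icc 0 T,
    StrictConcaveOn ℝ (Set.Ici 0 ×ˢ (Set.univ : Set ℝ)) (fun p : ℝ × ℝ => f s p.1 p.2)
  contDiff : ∀ s ∈ Set.Icc 0 T,
    ContDiffOn ℝ 1 (fun p : ℝ × ℝ => f s p.1 p.2) (Set.Ici 0 ×ˢ (Set.univ : Set ℝ))
  strictMono : ∀ s ∈ Set.Icc 0 T, ∀ u : ℝ, StrictMonoOn (fun y => f s y u) (Set.Ici 0)
  lipschitz : ∃ K > 0, ∀ s ∈ Set.Icc 0 T, ∀ y ∈ Set.Ici (0 : ℝ), ∀ u u' : ℝ,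
    |f s y u - f s y u'| ≤ K * |u - u'|
  growth : ∃ α ∈ Set.Ioo (0 : ℝ) 1, ∃ K > 0, ∀ s ∈ Set.Icc 0 T, ∀ y ∈ Set.Ici (0 : ℝ),
    |f s y 0| ≤ K * (1 + |y| ^ α)

/-- If `θ(t,s) = θ¹(t)·θ²(s)` for continuous strictly positive functions
`θ¹, θ² : [0,T] → (0,∞)`, then `C ↦ Y^C` is injective: if `Y^C_t = Y^{C'}_t` for all
`t ∈ [0,T]`, then `C_t = C'_t` for all `t ∈ [0,T]`. -/
theorem satisfaction_injective_of_product_kernel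
    (T : ℝ) (hT : 0 < T)
    (η : ℝ → ℝ) (θ : ℝ → ℝ → ℝ) (θ1 θ2 : ℝ → ℝ)
    (hη : ContinuousOn η (Set.Icc 0 T)) (hηnn : ∀ t ∈ Set.Icc 0 T, 0 ≤ η t)
    (hθ1 : ContinuousOn θ1 (Set.Icc 0 T)) (hθ1pos : ∀ t ∈ Set.Icc 0 T, 0 < θ1 t)
    (hθ2 : ContinuousOn θ2 (Set.Icc 0 T)) (hθ2pos : ∀ t ∈ Set.Icc 0 T, 0 < θ2 t)
    (hprod : ∀ t ∈ Set.Icc 0 T, ∀ s ∈ Set.Icc 0 T, θ t s = θ1 t * θ2 s)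
    (C C' : ConsumptionPlan T)
    (hY : ∀ t ∈ Set.Icc 0 T, satisfaction η θ C t = satisfaction η θ C' t) :
    ∀ t ∈ Set.Icc 0 T, C.val t = C'.val t := by
  have finC : IsFiniteMeasure C.μ := C.fin
  have finC' : IsFiniteMeasure C'.μ := C'.fin
  -- continuous extension of θ2 to all of ℝ
  set e : ℝ → ℝ := fun x => θ2 (Set.projIcc 0 T hT.le x) with he_def
  have he_mem : ∀ x, (Set.projIcc 0 T hT.le x : ℝ) ∈ Set.Icc 0 T := fun x =>
    (Set.projIcc 0 T hT.le x).2
  have he_cont : Continuous e := (hθ2.restrict).comp continuous_projIcc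
  have he_eq : ∀ x ∈ Set.Icc 0 T, e x = θ2 x := by
    intro x hx
    simp [he_def, Set.projIcc_of_mem hT.le hx]
  have he_pos : ∀ x, 0 < e x := fun x => hθ2pos _ (he_mem x)
  obtain ⟨xm, hxm, hmax⟩ :=
    isCompact_Icc.exists_isMaxOn (Set.nonempty_Icc.2 hT.le) hθ2
  set M : ℝ := θ2 xm with hM
  have he_le : ∀ x, e x ≤ M := fun x => hmax (he_mem x)
  set f : ℝ → ENNReal := fun x => ENNReal.ofReal (e x) with hf_def
  have hf_meas : Measurable f := ENNReal.measurable_ofReal.comp he_cont.measurable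
  -- the withDensity measures are finite
  have hfin : ∀ (μ : Measure ℝ) [IsFiniteMeasure μ], IsFiniteMeasure (μ.withDensity f) := by
    intro μ _
    refine isFiniteMeasure_withDensity ?_
    refine ((lintegral_mono fun x => ENNReal.ofReal_le_ofReal (he_le x)).trans_lt ?_).ne
    rw [MeasureTheory.lintegral_const]
    exact ENNReal.mul_lt_top ENNReal.ofReal_lt_top (measure_lt_top _ _)
  have finν : IsFiniteMeasure (C.μ.withDensity f) := hfin C.μ
  have finν' : IsFiniteMeasure (C'.μ.withDensity f) := hfin C'.μ
  -- key: satisfaction integral in terms of withDensity measure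
  have key : ∀ (D : ConsumptionPlan T), ∀ t ∈ Set.Icc 0 T,
      (∫ s in Set.Icc 0 t, θ t s ∂D.μ)
        = θ1 t * ((D.μ.withDensity f) (Set.Icc 0 t)).toReal := by
    intro D t ht
    have : IsFiniteMeasure D.μ := D.fin
    have hae : ∀ᵐ s ∂D.μ, s ∈ Set.Icc 0 T := mem_ae_iff.2 (by exact D.supp)
    have hae' : ∀ᵐ s ∂(D.μ.restrict (Set.Icc 0 t)), s ∈ Set.Icc 0 T :=
      ae_restrict_of_ae hae
    have hint : Integrable e (D.μ.restrict (Set.Icc 0 t)) := by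
      refine (integrable_const M).mono' he_cont.aestronglyMeasurable ?_
      filter_upwards with x
      rw [Real.norm_eq_abs, abs_of_pos (he_pos x)]
      exact he_le x
    have h1 : (∫ s in Set.Icc 0 t, θ t s ∂D.μ) = ∫ s in Set.Icc 0 t, θ1 t * e s ∂D.μ := by
      refine integral_congr_ae ?_
      filter_upwards [hae'] with s hs
      rw [hprod t ht s hs, he_eq s hs]
    rw [h1, integral_const_mul]
    congr 1
    rw [withDensity_apply _ measurableSet_Icc,
      ← ofReal_integral_eq_lintegral_ofReal hint
        (Filter.Eventually.of_forall fun x => (he_pos x).le),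
      ENNReal.toReal_ofReal (integral_nonneg fun x => (he_pos x).le)]
  -- the withDensity measures coincide on Icc 0 t, t ∈ [0,T]
  have hIcc : ∀ t ∈ Set.Icc 0 T,
      (C.μ.withDensity f) (Set.Icc 0 t) = (C'.μ.withDensity f) (Set.Icc 0 t) := by
    intro t ht
    have h := hY t ht
    unfold satisfaction at h
    have h2 : (∫ s in Set.Icc 0 t, θ t s ∂C.μ) = ∫ s in Set.Icc 0 t, θ t s ∂C'.μ := by
      linarith
    rw [key C t ht, key C' t ht] at h2
    have h3 := mul_left_cancel₀ (hθ1pos t ht).ne' h2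
    exact (ENNReal.toReal_eq_toReal_iff' (measure_ne_top _ _) (measure_ne_top _ _)).1 h3
  -- null sets of the withDensity measures
  have hnull : ∀ (D : ConsumptionPlan T), (D.μ.withDensity f) (Set.Icc 0 T)ᶜ = 0 := by
    intro D
    rw [withDensity_apply _ measurableSet_Icc.compl]
    exact setLIntegral_measure_zero _ _ D.supp
  -- the withDensity measures agree on all Iic a
  have hν : C.μ.withDensity f = C'.μ.withDensity f := by
    refine MeasureTheory.Measure.ext_of_Iic _ _ fun a => ?_
    have hgen : ∀ (D : ConsumptionPlan T),
        (D.μ.withDensity f) (Set.Iic a) = (D.μ.withDensity f) (Set.Icc 0 (min a T)) := by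
      intro D
      have hdiff : (D.μ.withDensity f) (Set.Iic a \ Set.Icc 0 T) = 0 :=
        measure_mono_null (Set.diff_subset_compl _ _) (hnull D)
      have hset : Set.Iic a ∩ Set.Icc 0 T = Set.Icc 0 (min a T) := by
        ext x
        simp only [Set.mem_inter_iff, Set.mem_Iic, Set.mem_Icc, le_min_iff]
        constructor
        · rintro ⟨h1, h2, h3⟩; exact ⟨h2, h1, h3⟩
        · rintro ⟨h1, h2, h3⟩; exact ⟨h2, h1, h3⟩
      rw [← measure_inter_add_diff (Set.Iic a) measurableSet_Icc, hdiff, add_zero, hset]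
    rw [hgen C, hgen C']
    by_cases ha : 0 ≤ a
    · exact hIcc (min a T) ⟨le_min ha hT.le, min_le_right a T⟩
    · rw [Set.Icc_eq_empty (by simp; intro h; linarith [min_le_left a T])]
      simp
  -- recover the original measures
  have hrec : ∀ (D : ConsumptionPlan T),
      (D.μ.withDensity f).withDensity (fun x => (f x)⁻¹) = D.μ := by
    intro D
    refine withDensity_inv_same hf_meas (Filter.Eventually.of_forall fun x => ?_)
      (Filter.Eventually.of_forall fun x => ?_)
    · exact (ENNReal.ofReal_pos.2 (he_pos x)).ne'
    · exact ENNReal.ofReal_ne_top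
  have hμ : C.μ = C'.μ := by
    rw [← hrec C, ← hrec C', hν]
  intro t _
  unfold ConsumptionPlan.val
  rw [hμ]
end
end

section
/- Let T>0, K>0, and let g,h:[0,T]→ℝ be integrable functions with δ_t := ∫_t^T (g_s + h_s) ds for t∈[0,T]. If (i) h_s ≥ −K|δ_s| for all s∈[0,T], and (ii) g_s ≥ 0 for all s∈[0,T] and g_s > 0 for all s in some nonempty open interval (t₀,t₁) ⊂ [0,T], then δ_0 > 0. -/
open MeasureTheory Set Filter

noncomputable section

/-- Integral monotonicity needing the inequality only on `Ico a b`. -/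
lemma integral_mono_ico {a b : ℝ} (hab : a ≤ b) {u v : ℝ → ℝ}
    (hu : IntervalIntegrable u volume a b) (hv : IntervalIntegrable v volume a b)
    (hle : ∀ s ∈ Ico a b, u s ≤ v s) :
    ∫ s in a..b, u s ≤ ∫ s in a..b, v s := by
  refine intervalIntegral.integral_mono_ae_restrict hab hu hv ?_
  have h1 : ∀ᵐ s ∂(volume : Measure ℝ), s ≠ b := by
    rw [ae_iff]
    have : {s : ℝ | ¬ s ≠ b} = {b} := by ext s; simp
    rw [this]
    exact Real.volume_singleton
  have h2 := ae_restrict_of_ae (μ := (volume : Measure ℝ)) (s := Icc a b) h1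
  have h3 := ae_restrict_mem (μ := (volume : Measure ℝ)) (measurableSet_Icc (a := a) (b := b))
  filter_upwards [h2, h3] with s hs hmem
  exact hle s ⟨hmem.1, lt_of_le_of_ne hmem.2 hs⟩

/-- Grönwall-type lemma in integral form: if continuous `f` satisfies
`f t ≤ K ∫_t^b f` on `[a,b]`, then `f a ≤ 0`. -/
lemma gronwall_zero {K a b : ℝ} (hK : 0 < K) (hab : a ≤ b) {f : ℝ → ℝ}
    (hf : ContinuousOn f (Icc a b))
    (hle : ∀ t ∈ Icc a b, f t ≤ K * ∫ s in t..b, f s) : f a ≤ 0 := by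
  obtain ⟨C, hC⟩ := isCompact_Icc.exists_bound_of_continuousOn hf
  have key : ∀ n : ℕ, ∀ t ∈ Icc a b, f t ≤ C * (K * (b - t)) ^ n / n.factorial := by
    intro n
    induction n with
    | zero =>
      intro t ht
      simpa using (le_abs_self (f t)).trans (hC t ht)
    | succ n ih =>
      intro t ht
      have hint_f : IntervalIntegrable f volume t b := by
        apply ContinuousOn.intervalIntegrable
        rw [uIcc_of_le ht.2]
        exact hf.mono (Icc_subset_Icc ht.1 le_rfl)
      have hint_p : IntervalIntegrable (fun s => C * K ^ n / n.factorial * (b - s) ^ n)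
          volume t b := by
        apply ContinuousOn.intervalIntegrable
        fun_prop
      have hmono : ∫ s in t..b, f s ≤ ∫ s in t..b, C * K ^ n / n.factorial * (b - s) ^ n := by
        refine intervalIntegral.integral_mono_on ht.2 hint_f hint_p ?_
        intro s hs
        have := ih s ⟨ht.1.trans hs.1, hs.2⟩
        calc f s ≤ C * (K * (b - s)) ^ n / n.factorial := this
          _ = C * K ^ n / n.factorial * (b - s) ^ n := by rw [mul_pow]; ring
      have hcomp : ∫ s in t..b, (b - s) ^ n = (b - t) ^ (n + 1) / (n + 1) := by
        have := intervalIntegral.integral_comp_sub_left (a := t) (b := b)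
          (fun x => x ^ n) b
        rw [this, sub_self, integral_pow]
        simp
      have hval : ∫ s in t..b, C * K ^ n / n.factorial * (b - s) ^ n
          = C * K ^ n / n.factorial * ((b - t) ^ (n + 1) / (n + 1)) := by
        rw [intervalIntegral.integral_const_mul, hcomp]
      calc f t ≤ K * ∫ s in t..b, f s := hle t ht
        _ ≤ K * (C * K ^ n / n.factorial * ((b - t) ^ (n + 1) / (n + 1))) := by
            rw [← hval]; exact mul_le_mul_of_nonneg_left hmono hK.le
        _ = C * (K * (b - t)) ^ (n + 1) / (n + 1).factorial := by
            rw [mul_pow, Nat.factorial_succ]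
            have h1 : ((n : ℝ) + 1) ≠ 0 := by positivity
            have h2 : ((n.factorial : ℝ)) ≠ 0 := Nat.cast_ne_zero.mpr n.factorial_ne_zero
            field_simp
            push_cast
            ring
  have hlim : Tendsto (fun n : ℕ => C * (K * (b - a)) ^ n / n.factorial) atTop (nhds 0) := by
    have h0 := FloorSemiring.tendsto_pow_div_factorial_atTop (K := ℝ) (K * (b - a))
    have := h0.const_mul C
    simpa [mul_div_assoc] using this
  refine ge_of_tendsto hlim ?_
  exact Eventually.of_forall fun n => key n a ⟨le_rfl, hab⟩

/-- Fubini for the triangle `t ≤ r ≤ s ≤ τ`. -/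
lemma fubini_tri {t τ : ℝ} (htτ : t ≤ τ) {φ ψ : ℝ → ℝ}
    (hφ : IntegrableOn φ (Ioc t τ) volume) (hψ : Continuous ψ) :
    (∫ r in t..τ, ψ r * ∫ s in r..τ, φ s) = ∫ s in t..τ, (∫ r in t..s, ψ r) * φ s := by
  set μ := volume.restrict (Ioc t τ) with hμdef
  have hSm : MeasurableSet {p : ℝ × ℝ | p.1 < p.2} :=
    measurableSet_lt measurable_fst measurable_snd
  have hψμ : Integrable ψ μ := hψ.integrableOn_Ioc
  have hG : Integrable (fun p : ℝ × ℝ => ψ p.1 * φ p.2) (μ.prod μ) := hψμ.mul_prod hφ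
  set F : ℝ × ℝ → ℝ := {p : ℝ × ℝ | p.1 < p.2}.indicator (fun q => ψ q.1 * φ q.2) with hFdef
  have hF : Integrable F (μ.prod μ) := hG.indicator hSm
  have swap : (∫ r, ∫ s, F (r, s) ∂μ ∂μ) = ∫ s, ∫ r, F (r, s) ∂μ ∂μ :=
    integral_integral_swap (f := fun r s => F (r, s)) hF
  have hL : (∫ r in t..τ, ψ r * ∫ s in r..τ, φ s) = ∫ r, ∫ s, F (r, s) ∂μ ∂μ := by
    rw [intervalIntegral.integral_of_le htτ]
    refine setIntegral_congr_fun measurableSet_Ioc ?_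
    intro r hr
    dsimp only
    have e1 : (fun s => F (r, s)) = (Ioi r).indicator (fun s => ψ r * φ s) := by
      funext s
      by_cases hrs : r < s <;> simp [hFdef, Set.indicator, hrs]
    rw [e1, integral_indicator measurableSet_Ioi, hμdef,
      Measure.restrict_restrict measurableSet_Ioi]
    have e2 : Ioi r ∩ Ioc t τ = Ioc r τ := by
      ext x
      simp only [mem_inter_iff, mem_Ioi, mem_Ioc]
      constructor
      · rintro ⟨h1, _, h3⟩; exact ⟨h1, h3⟩
      · rintro ⟨h1, h2⟩; exact ⟨h1, hr.1.trans h1, h2⟩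
    rw [e2, integral_const_mul, intervalIntegral.integral_of_le hr.2]
  have hR : (∫ s in t..τ, (∫ r in t..s, ψ r) * φ s) = ∫ s, ∫ r, F (r, s) ∂μ ∂μ := by
    rw [intervalIntegral.integral_of_le htτ]
    refine setIntegral_congr_fun measurableSet_Ioc ?_
    intro s hs
    dsimp only
    have e1 : (fun r => F (r, s)) = (Iio s).indicator (fun r => ψ r * φ s) := by
      funext r
      by_cases hrs : r < s <;> simp [hFdef, Set.indicator, hrs]
    rw [e1, integral_indicator measurableSet_Iio, hμdef,
      Measure.restrict_restrict measurableSet_Iio]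
    have e2 : Iio s ∩ Ioc t τ = Ioo t s := by
      ext x
      simp only [mem_inter_iff, mem_Iio, mem_Ioc, mem_Ioo]
      constructor
      · rintro ⟨h1, h2, _⟩; exact ⟨h2, h1⟩
      · rintro ⟨h1, h2⟩; exact ⟨h2, h1, (h2.le.trans hs.2)⟩
    rw [e2, ← integral_Ioc_eq_integral_Ioo, integral_mul_const,
      intervalIntegral.integral_of_le hs.1.le]
  rw [hL, hR, swap]

set_option maxHeartbeats 1000000 in
/-- Let `δ_t = ∫_t^T (g_s + h_s) ds`. If `h ≥ −K|δ|` on `[0,T]`, `g ≥ 0` on `[0,T]`, and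
`g > 0` on some nonempty open interval `(t₀,t₁) ⊆ [0,T]`, then `δ_0 > 0`. -/
theorem positivity_from_interval
    (T K : ℝ) (hT : 0 < T) (hK : 0 < K)
    (g h : ℝ → ℝ)
    (hg_int : IntegrableOn g (Set.Icc 0 T) volume)
    (hh_int : IntegrableOn h (Set.Icc 0 T) volume)
    (δ : ℝ → ℝ) (hδ : ∀ t, δ t = ∫ s in t..T, (g s + h s))
    (hh : ∀ s ∈ Set.Icc 0 T, -(K * |δ s|) ≤ h s)
    (hg0 : ∀ s ∈ Set.Icc 0 T, 0 ≤ g s)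
    (t0 t1 : ℝ) (ht0 : 0 ≤ t0) (ht01 : t0 < t1) (ht1 : t1 ≤ T)
    (hgpos : ∀ s ∈ Set.Ioo t0 t1, 0 < g s) :
    0 < δ 0 := by
  have huIcc : uIcc (0:ℝ) T = Icc 0 T := uIcc_of_le hT.le
  set f : ℝ → ℝ := fun s => g s + h s with hfdef
  have hf_int : IntegrableOn f (Icc 0 T) volume := hg_int.add hh_int
  have mkint : ∀ {u : ℝ → ℝ}, IntegrableOn u (Icc 0 T) volume → ∀ a b : ℝ, 0 ≤ a → a ≤ b →
      b ≤ T → IntervalIntegrable u volume a b := by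
    intro u hu a b h1 h2 h3
    apply (hu.mono_set ?_).intervalIntegrable
    rw [uIcc_of_le h2]
    exact Icc_subset_Icc h1 h3
  have intf := mkint hf_int
  have intg := mkint hg_int
  have inth := mkint hh_int
  have hδT : δ T = 0 := by rw [hδ]; simp
  have hδcont : ContinuousOn δ (Icc 0 T) := by
    have h0 : ContinuousOn (fun x => ∫ s in x..T, f s) (uIcc 0 T) :=
      intervalIntegral.continuousOn_primitive_interval_left (by rwa [huIcc])
    rw [huIcc] at h0
    exact h0.congr fun x _ => hδ x
  have hδadd : ∀ t τ : ℝ, 0 ≤ t → t ≤ τ → τ ≤ T → δ t = (∫ s in t..τ, f s) + δ τ := by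
    intro t τ h1 h2 h3
    rw [hδ t, hδ τ]
    exact (intervalIntegral.integral_add_adjacent_intervals (intf t τ h1 h2 h3)
      (intf τ T (h1.trans h2) h3 le_rfl)).symm
  -- Stage 1 : δ is nonnegative on [0,T]
  have stage1 : ∀ t ∈ Icc (0:ℝ) T, 0 ≤ δ t := by
    by_contra hcon
    push_neg at hcon
    obtain ⟨a, hamem, haneg⟩ := hcon
    set S : Set ℝ := {u | u ∈ Icc a T ∧ 0 ≤ δ u} with hSdef
    have hTS : T ∈ S := ⟨⟨hamem.2, le_rfl⟩, by rw [hδT]⟩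
    have hSne : S.Nonempty := ⟨T, hTS⟩
    have hSbdd : BddBelow S := ⟨a, fun u hu => hu.1.1⟩
    have hSclosed : IsClosed S := by
      have hSeq : S = Icc a T ∩ δ ⁻¹' Ici 0 := by
        ext u; simp [hSdef, mem_preimage]
      rw [hSeq]
      exact (hδcont.mono (Icc_subset_Icc hamem.1 le_rfl)).preimage_isClosed_of_isClosed
        isClosed_Icc isClosed_Ici
    set τ := sInf S with hτdef
    have hτS : τ ∈ S := hSclosed.csInf_mem hSne hSbdd
    have hτmem : τ ∈ Icc a T := hτS.1
    have hτnonneg : 0 ≤ δ τ := hτS.2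
    have haτ : a < τ := lt_of_le_of_ne hτmem.1 (fun he => by rw [← he] at hτnonneg; linarith)
    have hneg : ∀ s ∈ Ico a τ, δ s < 0 := by
      intro s hsmem
      by_contra hge
      push_neg at hge
      have hsS : s ∈ S := ⟨⟨hsmem.1, hsmem.2.le.trans hτmem.2⟩, hge⟩
      exact absurd (csInf_le hSbdd hsS) (not_le.mpr hsmem.2)
    have h0a : 0 ≤ a := hamem.1
    have hτT : τ ≤ T := hτmem.2
    have key : ∀ t ∈ Icc a τ, -δ t ≤ K * ∫ s in t..τ, -δ s := by
      intro t htm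
      have h0t : 0 ≤ t := h0a.trans htm.1
      have htτ : t ≤ τ := htm.2
      have hint_δ : IntervalIntegrable (fun s => K * δ s) volume t τ := by
        apply ContinuousOn.intervalIntegrable
        rw [uIcc_of_le htτ]
        exact continuousOn_const.mul (hδcont.mono (Icc_subset_Icc h0t hτT))
      have hintf := intf t τ h0t htτ hτT
      have hmono : ∫ s in t..τ, K * δ s ≤ ∫ s in t..τ, f s := by
        apply integral_mono_ico htτ hint_δ hintf
        intro s hs
        have hs0T : s ∈ Icc (0:ℝ) T := ⟨h0t.trans hs.1, hs.2.le.trans hτT⟩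
        have hδs : δ s < 0 := hneg s ⟨htm.1.trans hs.1, hs.2⟩
        have hhs := hh s hs0T
        rw [abs_of_neg hδs] at hhs
        have hgs := hg0 s hs0T
        simp only [hfdef]
        nlinarith
      have hadd := hδadd t τ h0t htτ hτT
      have hKd : K * ∫ s in t..τ, δ s ≤ δ t := by
        have hcm : ∫ s in t..τ, K * δ s = K * ∫ s in t..τ, δ s :=
          intervalIntegral.integral_const_mul K δ
        rw [hadd]
        linarith
      have hnegint : ∫ s in t..τ, -δ s = -∫ s in t..τ, δ s := intervalIntegral.integral_neg
      rw [hnegint, mul_neg]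
      linarith
    have hcont' : ContinuousOn (fun t => -δ t) (Icc a τ) :=
      (hδcont.mono (Icc_subset_Icc h0a hτT)).neg
    have := gronwall_zero hK haτ.le hcont' key
    linarith
  -- Stage 2 : comparison with the explicit subsolution z
  set φ : ℝ → ℝ := fun s => Real.exp (-(K * s)) * g s with hφdef
  have hφ_int : IntegrableOn φ (Icc 0 T) volume := by
    apply Integrable.bdd_mul (c := 1) hg_int
    · exact (Real.continuous_exp.comp (continuous_const.mul continuous_id).neg).aestronglyMeasurable
    · refine (ae_restrict_mem measurableSet_Icc).mono fun x hx => ?_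
      rw [Real.norm_eq_abs, abs_of_pos (Real.exp_pos _)]
      rw [Real.exp_le_one_iff]
      nlinarith [hx.1]
  have intφ := mkint hφ_int
  have hWT : (∫ s in T..T, φ s) = 0 := by simp
  set W : ℝ → ℝ := fun r => ∫ s in r..T, φ s with hWdef
  have hWcont : ContinuousOn W (Icc 0 T) := by
    have h0 : ContinuousOn (fun x => ∫ s in x..T, φ s) (uIcc 0 T) :=
      intervalIntegral.continuousOn_primitive_interval_left (by rwa [huIcc])
    rwa [huIcc] at h0
  have hWadd : ∀ t τ : ℝ, 0 ≤ t → t ≤ τ → τ ≤ T → W t = (∫ s in t..τ, φ s) + W τ := by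
    intro t τ h1 h2 h3
    simp only [hWdef]
    exact (intervalIntegral.integral_add_adjacent_intervals (intφ t τ h1 h2 h3)
      (intφ τ T (h1.trans h2) h3 le_rfl)).symm
  set z : ℝ → ℝ := fun r => Real.exp (K * r) * W r with hzdef
  have hzcont : ContinuousOn z (Icc 0 T) :=
    ((Real.continuous_exp.comp (continuous_const.mul continuous_id)).continuousOn).mul hWcont
  set D : ℝ → ℝ := fun r => δ r - z r with hDdef
  have hDcont : ContinuousOn D (Icc 0 T) := hδcont.sub hzcont
  have hDT : D T = 0 := by
    simp only [hDdef, hzdef, hWdef, hδT, hWT]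
    ring
  -- positivity of W 0
  have hφnonneg : ∀ s ∈ Icc (0:ℝ) T, 0 ≤ φ s := by
    intro s hs
    exact mul_nonneg (Real.exp_pos _).le (hg0 s hs)
  have hW0pos : 0 < W 0 := by
    have h1 : 0 < ∫ s in t0..t1, φ s := by
      apply intervalIntegral.intervalIntegral_pos_of_pos_on (intφ t0 t1 ht0 ht01.le ht1) ?_ ht01
      intro x hx
      exact mul_pos (Real.exp_pos _) (hgpos x hx)
    have h2 : 0 ≤ ∫ s in (0:ℝ)..t0, φ s :=
      intervalIntegral.integral_nonneg ht0
        (fun u hu => hφnonneg u ⟨hu.1, hu.2.trans (ht01.le.trans ht1)⟩)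
    have h3 : 0 ≤ ∫ s in t1..T, φ s :=
      intervalIntegral.integral_nonneg ht1
        (fun u hu => hφnonneg u ⟨(ht0.trans ht01.le).trans hu.1, hu.2⟩)
    have e1 := hWadd 0 t0 le_rfl ht0 (ht01.le.trans ht1)
    have e2 := hWadd t0 t1 ht0 ht01.le ht1
    have e3 := hWadd t1 T (ht0.trans ht01.le) ht1 le_rfl
    have e4 : W T = 0 := hWT
    linarith
  -- exponential integral
  have hexp : ∀ a b : ℝ, (∫ r in a..b, Real.exp (K * r) * K)
      = Real.exp (K * b) - Real.exp (K * a) := by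
    intro a b
    apply intervalIntegral.integral_eq_sub_of_hasDerivAt
    · intro x _
      have h1 : HasDerivAt (fun r : ℝ => K * r) K x := by
        simpa using (hasDerivAt_id x).const_mul K
      exact h1.exp
    · exact ((Real.continuous_exp.comp (continuous_const.mul continuous_id)).mul
        continuous_const).intervalIntegrable _ _
  -- Stage 2 claim: D ≥ 0 on [0,T]
  have stage2 : ∀ t ∈ Icc (0:ℝ) T, 0 ≤ D t := by
    by_contra hcon
    push_neg at hcon
    obtain ⟨a, hamem, haneg⟩ := hcon
    set S : Set ℝ := {u | u ∈ Icc a T ∧ 0 ≤ D u} with hSdef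
    have hTS : T ∈ S := ⟨⟨hamem.2, le_rfl⟩, by rw [hDT]⟩
    have hSne : S.Nonempty := ⟨T, hTS⟩
    have hSbdd : BddBelow S := ⟨a, fun u hu => hu.1.1⟩
    have hSclosed : IsClosed S := by
      have hSeq : S = Icc a T ∩ D ⁻¹' Ici 0 := by
        ext u; simp [hSdef, mem_preimage]
      rw [hSeq]
      exact (hDcont.mono (Icc_subset_Icc hamem.1 le_rfl)).preimage_isClosed_of_isClosed
        isClosed_Icc isClosed_Ici
    set τ := sInf S with hτdef
    have hτS : τ ∈ S := hSclosed.csInf_mem hSne hSbdd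
    have hτmem : τ ∈ Icc a T := hτS.1
    have hτnonneg : 0 ≤ D τ := hτS.2
    have haτ : a < τ := lt_of_le_of_ne hτmem.1 (fun he => by rw [← he] at hτnonneg; linarith)
    have hneg : ∀ s ∈ Ico a τ, D s < 0 := by
      intro s hsmem
      by_contra hge
      push_neg at hge
      have hsS : s ∈ S := ⟨⟨hsmem.1, hsmem.2.le.trans hτmem.2⟩, hge⟩
      exact absurd (csInf_le hSbdd hsS) (not_le.mpr hsmem.2)
    have h0a : 0 ≤ a := hamem.1
    have hτT : τ ≤ T := hτmem.2
    have haτle : a ≤ τ := haτ.le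
    have hIccsub : Icc a τ ⊆ Icc (0:ℝ) T := Icc_subset_Icc h0a hτT
    have huaτ : uIcc a τ = Icc a τ := uIcc_of_le haτle
    have hintδ : IntervalIntegrable δ volume a τ := by
      apply ContinuousOn.intervalIntegrable
      rw [huaτ]; exact hδcont.mono hIccsub
    have hintz : IntervalIntegrable z volume a τ := by
      apply ContinuousOn.intervalIntegrable
      rw [huaτ]; exact hzcont.mono hIccsub
    have hintD : IntervalIntegrable D volume a τ := by
      apply ContinuousOn.intervalIntegrable
      rw [huaτ]; exact hDcont.mono hIccsub
    have hintga := intg a τ h0a haτle hτT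
    have hintha := inth a τ h0a haτle hτT
    -- (1) lower bound for δ a
    have e0 : δ a = (∫ s in a..τ, g s) + (∫ s in a..τ, h s) + δ τ := by
      rw [hδadd a τ h0a haτle hτT]
      have : (∫ s in a..τ, f s) = (∫ s in a..τ, g s) + ∫ s in a..τ, h s :=
        intervalIntegral.integral_add hintga hintha
      linarith
    have e1 : -(K * ∫ s in a..τ, δ s) ≤ ∫ s in a..τ, h s := by
      have hmono : ∫ s in a..τ, -(K * δ s) ≤ ∫ s in a..τ, h s := by
        refine intervalIntegral.integral_mono_on haτle ((hintδ.const_mul K).neg) hintha ?_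
        intro s hs
        have hs0T : s ∈ Icc (0:ℝ) T := hIccsub hs
        have hhs := hh s hs0T
        rw [abs_of_nonneg (stage1 s hs0T)] at hhs
        linarith
      have hc : ∫ s in a..τ, -(K * δ s) = -(K * ∫ s in a..τ, δ s) := by
        rw [intervalIntegral.integral_neg, intervalIntegral.integral_const_mul]
      linarith [hmono, hc.ge, hc.le]
    -- (2) the Fubini identity for z
    have hφIoc : IntegrableOn φ (Ioc a τ) volume :=
      hφ_int.mono_set ((Ioc_subset_Icc_self).trans hIccsub)
    have hψcont : Continuous (fun r : ℝ => Real.exp (K * r) * K) :=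
      (Real.continuous_exp.comp (continuous_const.mul continuous_id)).mul continuous_const
    have fub := fubini_tri haτle hφIoc hψcont
    have hcont_prim : ContinuousOn (fun r => ∫ s in r..τ, φ s) (Icc a τ) := by
      have h0 : ContinuousOn (fun x => ∫ s in x..τ, φ s) (uIcc a τ) :=
        intervalIntegral.continuousOn_primitive_interval_left
          (by rw [huaτ]; exact hφ_int.mono_set hIccsub)
      rwa [huaτ] at h0
    have hint1 : IntervalIntegrable (fun r => Real.exp (K * r) * K * ∫ s in r..τ, φ s)
        volume a τ := by
      apply ContinuousOn.intervalIntegrable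
      rw [huaτ]
      exact (hψcont.continuousOn).mul hcont_prim
    have hint2 : IntervalIntegrable (fun r => Real.exp (K * r) * K * W τ) volume a τ :=
      (hψcont.mul continuous_const).intervalIntegrable _ _
    have ezK : K * (∫ r in a..τ, z r) = (∫ s in a..τ, g s) - z a + z τ := by
      have s1 : K * (∫ r in a..τ, z r) = ∫ r in a..τ, Real.exp (K * r) * K * W r := by
        rw [← intervalIntegral.integral_const_mul]
        apply intervalIntegral.integral_congr
        intro r _
        simp only [hzdef]
        ring
      have s2 : (∫ r in a..τ, Real.exp (K * r) * K * W r)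
          = (∫ r in a..τ, Real.exp (K * r) * K * ∫ s in r..τ, φ s)
            + ∫ r in a..τ, Real.exp (K * r) * K * W τ := by
        rw [← intervalIntegral.integral_add hint1 hint2]
        apply intervalIntegral.integral_congr
        intro r hr
        rw [huaτ] at hr
        dsimp only
        rw [hWadd r τ (h0a.trans hr.1) hr.2 hτT]
        ring
      have s3 : (∫ r in a..τ, Real.exp (K * r) * K * W τ)
          = (Real.exp (K * τ) - Real.exp (K * a)) * W τ := by
        rw [intervalIntegral.integral_mul_const, hexp a τ]
      have s4 : (∫ r in a..τ, Real.exp (K * r) * K * ∫ s in r..τ, φ s)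
          = ∫ s in a..τ, (Real.exp (K * s) - Real.exp (K * a)) * φ s := by
        rw [fub]
        apply intervalIntegral.integral_congr
        intro s _
        dsimp only
        rw [hexp a s]
      have hes : ∀ s : ℝ, (Real.exp (K * s) - Real.exp (K * a)) * φ s
          = g s - Real.exp (K * a) * φ s := by
        intro s
        have he : Real.exp (K * s) * Real.exp (-(K * s)) = 1 := by
          rw [← Real.exp_add]; simp
        simp only [hφdef]
        linear_combination g s * he
      have hintφa := intφ a τ h0a haτle hτT
      have s5 : (∫ s in a..τ, (Real.exp (K * s) - Real.exp (K * a)) * φ s)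
          = (∫ s in a..τ, g s) - Real.exp (K * a) * ∫ s in a..τ, φ s := by
        have c1 : (∫ s in a..τ, (Real.exp (K * s) - Real.exp (K * a)) * φ s)
            = ∫ s in a..τ, (g s - Real.exp (K * a) * φ s) := by
          apply intervalIntegral.integral_congr
          intro s _
          exact hes s
        rw [c1, intervalIntegral.integral_sub hintga (hintφa.const_mul _),
          intervalIntegral.integral_const_mul]
      have s6 : (∫ s in a..τ, φ s) = W a - W τ := by
        have := hWadd a τ h0a haτle hτT
        linarith
      rw [s1, s2, s3, s4, s5, s6]
      simp only [hzdef]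
      ring
    -- (3) integral of D is nonpositive
    have eD : ∫ s in a..τ, D s ≤ 0 := by
      have h0 : ∫ s in a..τ, D s ≤ ∫ s in a..τ, (0:ℝ) :=
        integral_mono_ico haτle hintD intervalIntegrable_const
          (fun s hs => (hneg s hs).le)
      simpa using h0
    -- (4) combine
    have eint : ∫ s in a..τ, D s = (∫ s in a..τ, δ s) - ∫ s in a..τ, z s := by
      have : (∫ s in a..τ, (δ s - z s)) = (∫ s in a..τ, δ s) - ∫ s in a..τ, z s :=
        intervalIntegral.integral_sub hintδ hintz
      simpa [hDdef] using this
    have hKD : K * (∫ s in a..τ, D s) ≤ 0 := mul_nonpos_of_nonneg_of_nonpos hK.le eD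
    have hDa : D a = δ a - z a := rfl
    have hDτ : D τ = δ τ - z τ := rfl
    have : 0 ≤ D a := by
      have hza : z a = (∫ s in a..τ, g s) + z τ - K * ∫ r in a..τ, z r := by linarith [ezK]
      nlinarith [e0, e1, hτnonneg, hKD, eint]
    linarith
  -- conclude
  have hD0 : 0 ≤ D 0 := stage2 0 ⟨le_rfl, hT.le⟩
  have hz0 : z 0 = W 0 := by simp [hzdef]
  have hD0' : D 0 = δ 0 - z 0 := rfl
  linarith [hW0pos]
end
end
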